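/- Let τ̂ : [−1,1] → [−1,1] be a piecewise monotone map such that for every maximal monotonicity interval J, the third image τ̂³(J) equals [−1,1], and suppose |τ̂'| ≥ 4 on each branch. Then for every interval J₀ of positive length there exists n with τ̂ⁿ(J₀) = [−1,1]; consequently τ̂ is topologically mixing. -/

import Mathlib

lemma stmt_19_mvt_aux (τ : ℝ → ℝ) (A B : ℝ)
    (hC1 : ContDiffOn ℝ 1 τ (Set.Ioo A B))
    (hexp : ∀ x ∈ Set.Ioo A B, 4 ≤ |deriv τ x|)
    (u v : ℝ) (huv : u < v) (hA : A ≤ u) (hB : v ≤ B) :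
    ∃ x' y' : ℝ, x' < y' ∧ (7/2) * (v - u) ≤ y' - x' ∧
      Set.Icc x' y' ⊆ τ '' Set.Icc u v := by
  have hvu : 0 < v - u := by linarith
  set ε := (v - u) / 16 with hε
  have hε0 : 0 < ε := by positivity
  set u' := u + ε with hu'
  set v' := v - ε with hv'
  have huv' : u' < v' := by simp only [hu', hv', hε]; linarith
  have hsub : Set.Icc u' v' ⊆ Set.Ioo A B := fun z hz => by
    constructor <;> [nlinarith [hz.1]; nlinarith [hz.2]]
  have hsub2 : Set.Icc u' v' ⊆ Set.Icc u v := fun z hz => by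
    constructor <;> [nlinarith [hz.1]; nlinarith [hz.2]]
  have hcont : ContinuousOn τ (Set.Icc u' v') := hC1.continuousOn.mono hsub
  have hderiv : ∀ x ∈ Set.Ioo u' v', HasDerivAt τ (deriv τ x) x := by
    intro x hx
    have hxAB : x ∈ Set.Ioo A B := hsub (Set.Ioo_subset_Icc_self hx)
    exact ((hC1.differentiableOn one_ne_zero x hxAB).differentiableAt
      (isOpen_Ioo.mem_nhds hxAB)).hasDerivAt
  obtain ⟨c, hc, hslope⟩ := exists_hasDerivAt_eq_slope τ (deriv τ) huv' hcont hderiv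
  have hcAB : c ∈ Set.Ioo A B := hsub (Set.Ioo_subset_Icc_self hc)
  have h4 : 4 ≤ |deriv τ c| := hexp c hcAB
  have hlen : 4 * (v' - u') ≤ |τ v' - τ u'| := by
    have h1 : |deriv τ c| * (v' - u') = |τ v' - τ u'| := by
      rw [hslope, abs_div, abs_of_pos (by linarith : (0:ℝ) < v' - u'),
        div_mul_cancel₀]
      linarith
    nlinarith [abs_nonneg (deriv τ c)]
  have hmm : max (τ u') (τ v') - min (τ u') (τ v') = |τ v' - τ u'| := by
    rw [max_sub_min_eq_abs, abs_sub_comm]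
  refine ⟨min (τ u') (τ v'), max (τ u') (τ v'), ?_, ?_, ?_⟩
  · have : 0 < |τ v' - τ u'| := by
      have : 0 < 4 * (v' - u') := by nlinarith
      linarith
    linarith [min_le_max (a := τ u') (b := τ v')]
  · have : (7/2) * (v - u) ≤ 4 * (v' - u') := by
      simp only [hu', hv', hε]; nlinarith
    linarith
  · rcases le_total (τ u') (τ v') with h | h
    · rw [min_eq_left h, max_eq_right h]
      exact (intermediate_value_Icc huv'.le hcont).trans (Set.image_mono hsub2)
    · rw [min_eq_right h, max_eq_left h]
      exact (intermediate_value_Icc' huv'.le hcont).trans (Set.image_mono hsub2)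

lemma stmt_19_grow_aux (τ : ℝ → ℝ) (p : ℕ)
    (a : Fin (p + 1) → ℝ) (ha : StrictMono a) (ha0 : a 0 = -1) (hap : a (Fin.last p) = 1)
    (hmvt : ∀ k : Fin p, ∀ u v : ℝ, u < v → a k.castSucc ≤ u → v ≤ a k.succ →
      ∃ x' y' : ℝ, x' < y' ∧ (7/2) * (v - u) ≤ y' - x' ∧
        Set.Icc x' y' ⊆ τ '' Set.Icc u v)
    (x y : ℝ) (hxy : x < y) (hsub : Set.Icc x y ⊆ Set.Icc (-1 : ℝ) 1) :
    (∃ k : Fin p, Set.Icc (a k.castSucc) (a k.succ) ⊆ Set.Icc x y) ∨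
    (∃ x' y' : ℝ, x' < y' ∧ (3/2) * (y - x) ≤ y' - x' ∧
      Set.Icc x' y' ⊆ τ '' Set.Icc x y) := by
  classical
  have hx1 : -1 ≤ x := (hsub (Set.left_mem_Icc.mpr hxy.le)).1
  have hy1 : y ≤ 1 := (hsub (Set.right_mem_Icc.mpr hxy.le)).2
  set b : ℕ → ℝ := fun i => a ⟨min i p, Nat.lt_succ_of_le (min_le_right _ _)⟩ with hb
  have hbeq : ∀ (i : ℕ) (h : i ≤ p), b i = a ⟨i, Nat.lt_succ_of_le h⟩ := by
    intro i hi; simp only [hb]; congr 1; exact Fin.ext (min_eq_left hi)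
  have hbmono : Monotone b := by
    intro i j hij
    exact (ha.monotone : Monotone a) (by simp [Fin.le_def]; omega)
  have hb0 : b 0 = -1 := by rw [hbeq 0 (Nat.zero_le p)]; exact ha0
  have hbp : b p = 1 := by rw [hbeq p le_rfl]; exact hap
  -- largest i with b i ≤ x
  set i := Nat.findGreatest (fun i => b i ≤ x) p with hi
  have hile : b i ≤ x :=
    Nat.findGreatest_spec (P := fun i => b i ≤ x) (Nat.zero_le p)
      (show b 0 ≤ x by rw [hb0]; exact hx1)
  have hilep : i ≤ p := Nat.findGreatest_le (P := fun i => b i ≤ x) p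
  have himax : ∀ m, i < m → m ≤ p → x < b m := by
    intro m h1 h2
    exact lt_of_not_ge (Nat.findGreatest_is_greatest h1 h2)
  have hip : i < p := by
    rcases eq_or_lt_of_le hilep with h | h
    · exfalso; rw [h, hbp] at hile; linarith
    · exact h
  -- smallest j with y ≤ b j
  have hex : ∃ j, y ≤ b j := ⟨p, by rw [hbp]; exact hy1⟩
  set j := Nat.find hex with hj
  have hjy : y ≤ b j := Nat.find_spec hex
  have hjmin : ∀ m, m < j → b m < y := fun m hm => lt_of_not_ge (Nat.find_min hex hm)
  have hjlep : j ≤ p := Nat.find_min' hex (by rw [hbp]; exact hy1)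
  have hij : i < j := by
    by_contra h
    push_neg at h
    have := hbmono h
    linarith
  -- case split
  rcases lt_trichotomy j (i + 2) with hc | hc | hc
  · -- j = i + 1 : interval inside one branch
    have hji : j = i + 1 := by omega
    right
    set k : Fin p := ⟨i, hip⟩ with hk
    have h1 : a k.castSucc ≤ x := by
      have : a k.castSucc = b i := (hbeq i hilep).symm
      rw [this]; exact hile
    have h2 : y ≤ a k.succ := by
      have : a k.succ = b (i+1) := by
        rw [hbeq (i+1) (by omega)]; rfl
      rw [this, ← hji]; exact hjy
    obtain ⟨x', y', h3, h4, h5⟩ := hmvt k x y hxy h1 h2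
    exact ⟨x', y', h3, by linarith, h5⟩
  · -- j = i + 2 : one branch point m = b (i+1) strictly inside
    have hi1p : i + 1 ≤ p := by omega
    set m := b (i + 1) with hm
    have hxm : x < m := himax (i+1) (by omega) hi1p
    have hmy : m < y := hjmin (i+1) (by omega)
    rcases le_total ((y - x) / 2) (m - x) with hhalf | hhalf
    · -- left half long
      set k : Fin p := ⟨i, hip⟩ with hk
      have h1 : a k.castSucc ≤ x := by
        have : a k.castSucc = b i := (hbeq i hilep).symm
        rw [this]; exact hile
      have h2 : m ≤ a k.succ := by
        have : a k.succ = b (i+1) := by rw [hbeq (i+1) hi1p]; rfl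
        rw [this]
      obtain ⟨x', y', h3, h4, h5⟩ := hmvt k x m hxm h1 h2
      refine Or.inr ⟨x', y', h3, by linarith, h5.trans (Set.image_mono ?_)⟩
      exact Set.Icc_subset_Icc le_rfl hmy.le
    · -- right half long
      have hi1p' : i + 1 < p := by omega
      set k : Fin p := ⟨i + 1, hi1p'⟩ with hk
      have h1 : a k.castSucc ≤ m := by
        have : a k.castSucc = b (i+1) := (hbeq (i+1) hi1p).symm
        rw [this]
      have h2 : y ≤ a k.succ := by
        have : a k.succ = b (i+2) := by rw [hbeq (i+2) (by omega)]; rfl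
        rw [this, show i + 2 = j from hc.symm]; exact hjy
      obtain ⟨x', y', h3, h4, h5⟩ := hmvt k m y hmy h1 h2
      refine Or.inr ⟨x', y', h3, by linarith, h5.trans (Set.image_mono ?_)⟩
      exact Set.Icc_subset_Icc hxm.le le_rfl
  · -- j ≥ i + 3 : a whole branch inside
    left
    have hi1p : i + 1 < p := by omega
    refine ⟨⟨i + 1, hi1p⟩, ?_⟩
    have e1 : a (Fin.castSucc ⟨i+1, hi1p⟩) = b (i+1) := (hbeq (i+1) (by omega)).symm
    have e2 : a (Fin.succ ⟨i+1, hi1p⟩) = b (i+2) := by rw [hbeq (i+2) (by omega)]; rfl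
    rw [e1, e2]
    exact Set.Icc_subset_Icc (himax (i+1) (by omega) (by omega)).le
      (hjmin (i+2) (by omega)).le

lemma stmt_19_reach_aux (τ : ℝ → ℝ) (p : ℕ) (a : Fin (p + 1) → ℝ)
    (hmaps : Set.MapsTo τ (Set.Icc (-1 : ℝ) 1) (Set.Icc (-1 : ℝ) 1))
    (hgrow : ∀ x y : ℝ, x < y → Set.Icc x y ⊆ Set.Icc (-1 : ℝ) 1 →
      (∃ k : Fin p, Set.Icc (a k.castSucc) (a k.succ) ⊆ Set.Icc x y) ∨
      (∃ x' y' : ℝ, x' < y' ∧ (3/2) * (y - x) ≤ y' - x' ∧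
        Set.Icc x' y' ⊆ τ '' Set.Icc x y)) :
    ∀ N : ℕ, ∀ x y : ℝ, x < y → Set.Icc x y ⊆ Set.Icc (-1 : ℝ) 1 →
      2 < (3/2 : ℝ)^N * (y - x) →
      ∃ n : ℕ, ∃ k : Fin p, Set.Icc (a k.castSucc) (a k.succ) ⊆ τ^[n] '' Set.Icc x y := by
  intro N
  induction N with
  | zero =>
    intro x y hxy hsub hbig
    exfalso
    have hx1 : -1 ≤ x := (hsub (Set.left_mem_Icc.mpr hxy.le)).1
    have hy1 : y ≤ 1 := (hsub (Set.right_mem_Icc.mpr hxy.le)).2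
    simp only [pow_zero, one_mul] at hbig
    linarith
  | succ N ih =>
    intro x y hxy hsub hbig
    rcases hgrow x y hxy hsub with ⟨k, hk⟩ | ⟨x', y', h1, h2, h3⟩
    · exact ⟨0, k, by simpa using hk⟩
    · have hsub' : Set.Icc x' y' ⊆ Set.Icc (-1 : ℝ) 1 :=
        h3.trans ((Set.image_mono hsub).trans hmaps.image_subset)
      have hbig' : 2 < (3/2 : ℝ)^N * (y' - x') := by
        have hpow : (0:ℝ) < (3/2 : ℝ)^N := by positivity
        have : (3/2 : ℝ)^(N+1) * (y - x) = (3/2:ℝ)^N * ((3/2) * (y - x)) := by ring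
        nlinarith
      obtain ⟨n, k, hk⟩ := ih x' y' h1 hsub' hbig'
      refine ⟨n + 1, k, hk.trans ?_⟩
      rw [Function.iterate_succ, Set.image_comp]
      exact Set.image_mono h3

theorem stmt_19 (τ : ℝ → ℝ) (p : ℕ) (hp : 0 < p)
    (a : Fin (p + 1) → ℝ) (ha : StrictMono a) (ha0 : a 0 = -1) (hap : a (Fin.last p) = 1)
    (hmaps : Set.MapsTo τ (Set.Icc (-1 : ℝ) 1) (Set.Icc (-1 : ℝ) 1))
    -- `τ` is monotone on each maximal monotonicity interval
    (hmono : ∀ k : Fin p, StrictMonoOn τ (Set.Icc (a k.castSucc) (a k.succ)) ∨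
      StrictAntiOn τ (Set.Icc (a k.castSucc) (a k.succ)))
    -- `τ` is piecewise C¹ with `|τ'| ≥ 4` on each branch
    (hC1 : ∀ k : Fin p, ContDiffOn ℝ 1 τ (Set.Ioo (a k.castSucc) (a k.succ)))
    (hexp : ∀ k : Fin p, ∀ x ∈ Set.Ioo (a k.castSucc) (a k.succ), 4 ≤ |deriv τ x|)
    -- the third image of each maximal monotonicity interval is all of `[-1,1]`
    (hfull : ∀ k : Fin p, τ^[3] '' Set.Icc (a k.castSucc) (a k.succ) = Set.Icc (-1 : ℝ) 1) :
    (∀ x y : ℝ, -1 ≤ x → x < y → y ≤ 1 →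
      ∃ n : ℕ, τ^[n] '' Set.Icc x y = Set.Icc (-1 : ℝ) 1) ∧
    (∀ U V : Set ℝ, IsOpen U → IsOpen V →
      (U ∩ Set.Icc (-1 : ℝ) 1).Nonempty → (V ∩ Set.Icc (-1 : ℝ) 1).Nonempty →
      ∃ N : ℕ, ∀ n ≥ N, (τ^[n] '' (U ∩ Set.Icc (-1 : ℝ) 1) ∩ V).Nonempty) := by
  set I : Set ℝ := Set.Icc (-1 : ℝ) 1 with hIdef
  -- every branch is contained in [-1,1]
  have hbr : ∀ k : Fin p, Set.Icc (a k.castSucc) (a k.succ) ⊆ I := by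
    intro k
    apply Set.Icc_subset_Icc
    · rw [← ha0]; exact ha.monotone (Fin.zero_le _)
    · rw [← hap]; exact ha.monotone (Fin.le_last _)
  -- τ '' I = I
  have hI : τ '' I = I := by
    apply subset_antisymm hmaps.image_subset
    set k0 : Fin p := ⟨0, hp⟩ with hk0
    have h2 : τ^[2] '' Set.Icc (a k0.castSucc) (a k0.succ) ⊆ I :=
      (Set.image_mono (hbr k0)).trans (hmaps.iterate 2).image_subset
    calc I = τ^[3] '' Set.Icc (a k0.castSucc) (a k0.succ) := (hfull k0).symm
      _ = τ '' (τ^[2] '' Set.Icc (a k0.castSucc) (a k0.succ)) := by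
          rw [show (3 : ℕ) = 2 + 1 from rfl, Function.iterate_succ', Set.image_comp]
      _ ⊆ τ '' I := Set.image_mono h2
  have hIn : ∀ n : ℕ, τ^[n] '' I = I := by
    intro n
    induction n with
    | zero => simp
    | succ n ih => rw [Function.iterate_succ', Set.image_comp, ih, hI]
  -- the MVT step
  have hmvt : ∀ k : Fin p, ∀ u v : ℝ, u < v → a k.castSucc ≤ u → v ≤ a k.succ →
      ∃ x' y' : ℝ, x' < y' ∧ (7/2) * (v - u) ≤ y' - x' ∧
        Set.Icc x' y' ⊆ τ '' Set.Icc u v := fun k u v huv h1 h2 =>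
    stmt_19_mvt_aux τ _ _ (hC1 k) (hexp k) u v huv h1 h2
  have hgrow := stmt_19_grow_aux τ p a ha ha0 hap hmvt
  have hreach := stmt_19_reach_aux τ p a hmaps hgrow
  -- the key statement : eventually the image is all of I
  have hkey : ∀ x y : ℝ, -1 ≤ x → x < y → y ≤ 1 →
      ∃ n : ℕ, ∀ m : ℕ, n ≤ m → τ^[m] '' Set.Icc x y = I := by
    intro x y hx hxy hy
    have hsub : Set.Icc x y ⊆ I := Set.Icc_subset_Icc hx hy
    obtain ⟨N, hN⟩ := pow_unbounded_of_one_lt (2 / (y - x)) (by norm_num : (1:ℝ) < 3/2)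
    have hbig : 2 < (3/2 : ℝ)^N * (y - x) := by
      rw [div_lt_iff₀ (by linarith)] at hN
      linarith
    obtain ⟨n, k, hk⟩ := hreach N x y hxy hsub hbig
    refine ⟨n + 3, fun m hm => ?_⟩
    apply subset_antisymm
    · exact (Set.image_mono hsub).trans (hmaps.iterate m).image_subset
    · set q := m - (n + 3) with hq
      have hm' : m = q + 3 + n := by omega
      have hIm : τ^[m] '' Set.Icc x y = τ^[q] '' (τ^[3] '' (τ^[n] '' Set.Icc x y)) := by
        rw [hm', Function.iterate_add, Function.iterate_add, Set.image_comp, Set.image_comp]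
      rw [hIm]
      have h3 : I ⊆ τ^[3] '' (τ^[n] '' Set.Icc x y) := by
        rw [← hfull k]; exact Set.image_mono hk
      calc I = τ^[q] '' I := (hIn q).symm
        _ ⊆ τ^[q] '' (τ^[3] '' (τ^[n] '' Set.Icc x y)) := Set.image_mono h3
  constructor
  · intro x y hx hxy hy
    obtain ⟨n, hn⟩ := hkey x y hx hxy hy
    exact ⟨n, hn n le_rfl⟩
  · intro U V hU hV ⟨u, huU, huI⟩ ⟨v, hvV, hvI⟩
    -- find a nondegenerate interval inside U ∩ I
    obtain ⟨ε, hε, hball⟩ := Metric.isOpen_iff.mp hU u huU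
    have hball' : Set.Ioo (u - ε) (u + ε) ⊆ U := by
      rw [← Real.ball_eq_Ioo]; exact hball
    have hint : ∃ x y : ℝ, -1 ≤ x ∧ x < y ∧ y ≤ 1 ∧ Set.Icc x y ⊆ U ∩ I := by
      rcases lt_or_eq_of_le huI.2 with h1 | h1
      · refine ⟨u, min (u + ε/2) 1, huI.1, lt_min (by linarith) h1, min_le_right _ _, ?_⟩
        intro z hz
        have hz1 : u ≤ z := hz.1
        have hz3 : z ≤ u + ε/2 := le_trans hz.2 (min_le_left _ _)
        have hz4 : z ≤ 1 := le_trans hz.2 (min_le_right _ _)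
        exact ⟨hball' ⟨by linarith, by linarith⟩, ⟨by linarith [huI.1], hz4⟩⟩
      · refine ⟨max (u - ε/2) (-1), u, le_max_right _ _,
          max_lt (by linarith) (by linarith [huI.1, huI.2]), huI.2, ?_⟩
        intro z hz
        have hz2 : z ≤ u := hz.2
        have hz3 : u - ε/2 ≤ z := le_trans (le_max_left _ _) hz.1
        have hz4 : -1 ≤ z := le_trans (le_max_right _ _) hz.1
        exact ⟨hball' ⟨by linarith, by linarith⟩, ⟨hz4, by linarith [huI.2]⟩⟩
    obtain ⟨x, y, hx, hxy, hy, hxyU⟩ := hint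
    obtain ⟨n, hn⟩ := hkey x y hx hxy hy
    refine ⟨n, fun m hm => ⟨v, ?_, hvV⟩⟩
    have : v ∈ τ^[m] '' Set.Icc x y := by rw [hn m hm]; exact hvI
    exact Set.image_mono hxyU this
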